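/- For every integer t ≥ 2, every F_{t,t}-free finite bipartite graph with at least two vertices contains two distinct vertices x, y with sd(x, y) ≤ 2t. -/

import Mathlib

open SimpleGraph

/-- `F_{t,p}`: two stars `K_{1,t}` and `K_{1,p}` with their centers (`inl 0` and `inl 1`)
in one part of the bipartition, plus an isolated vertex (`inr (t+p)`) in the other part. -/
def Ftp (t p : ℕ) : SimpleGraph (Fin 2 ⊕ Fin (t + p + 1)) :=
  SimpleGraph.fromRel fun u v =>
    match u, v with
    | Sum.inl a, Sum.inr b => (a = 0 ∧ (b : ℕ) < t) ∨ (a = 1 ∧ t ≤ (b : ℕ) ∧ (b : ℕ) < t + p)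
    | _, _ => False

/-- The symmetric difference of two vertices `x, y`: the number of vertices other than
`x` and `y` adjacent to exactly one of `x` and `y`. -/
noncomputable def sd {V : Type*} (G : SimpleGraph V) (x y : V) : ℕ :=
  {z : V | z ≠ x ∧ z ≠ y ∧ Xor' (G.Adj x z) (G.Adj y z)}.ncard

private lemma fin2_eq {a b d : Fin 2} (h1 : a ≠ d) (h2 : b ≠ d) : a = b := by
  fin_cases a <;> fin_cases b <;> fin_cases d <;> simp_all

lemma embed_of_pair {V : Type*} [Fintype V] [DecidableEq V] (t : ℕ)
    (G : SimpleGraph V) [DecidableRel G.Adj] (c : G.Coloring (Fin 2))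
    (x y z : V) (hxy : x ≠ y) (hcxy : c x = c y) (hcz : c z ≠ c x)
    (hzx : ¬ G.Adj z x) (hzy : ¬ G.Adj z y)
    (h1 : t ≤ (G.neighborFinset x \ G.neighborFinset y).card)
    (h2 : t ≤ (G.neighborFinset y \ G.neighborFinset x).card) :
    Nonempty (Ftp t t ↪g G) := by
  have htwo : ∀ a : Fin 2, a = 0 ∨ a = 1 := by decide
  obtain ⟨P, hPsub, hPcard⟩ := Finset.exists_subset_card_eq h1
  obtain ⟨Q, hQsub, hQcard⟩ := Finset.exists_subset_card_eq h2
  have hPmem : ∀ v ∈ P, G.Adj x v ∧ ¬ G.Adj y v := by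
    intro v hv
    have := hPsub hv
    rw [Finset.mem_sdiff, SimpleGraph.mem_neighborFinset, SimpleGraph.mem_neighborFinset] at this
    exact this
  have hQmem : ∀ v ∈ Q, G.Adj y v ∧ ¬ G.Adj x v := by
    intro v hv
    have := hQsub hv
    rw [Finset.mem_sdiff, SimpleGraph.mem_neighborFinset, SimpleGraph.mem_neighborFinset] at this
    exact this
  have hcP : ∀ v ∈ P, c v ≠ c x := fun v hv => fun h => c.valid (hPmem v hv).1 h.symm
  have hcQ : ∀ v ∈ Q, c v ≠ c x := fun v hv => fun h =>
    c.valid (hQmem v hv).1 (h.trans hcxy).symm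
  have nonadj : ∀ u v : V, c u = c v → ¬ G.Adj u v := fun u v h hadj => c.valid hadj h
  set eP := P.equivFinOfCardEq hPcard with heP
  set eQ := Q.equivFinOfCardEq hQcard with heQ
  set fP : Fin t → V := fun i => (eP.symm i : V) with hfP
  set fQ : Fin t → V := fun i => (eQ.symm i : V) with hfQ
  have hfPP : ∀ i, fP i ∈ P := fun i => (eP.symm i).2
  have hfQQ : ∀ i, fQ i ∈ Q := fun i => (eQ.symm i).2
  have hfPinj : Function.Injective fP := fun i j h => eP.symm.injective (Subtype.ext h)
  have hfQinj : Function.Injective fQ := fun i j h => eQ.symm.injective (Subtype.ext h)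
  set g : Fin (t + t + 1) → V := fun b =>
    if h : (b : ℕ) < t then fP ⟨b, h⟩
    else if h' : (b : ℕ) - t < t then fQ ⟨(b : ℕ) - t, h'⟩
    else z with hg
  have hg1 : ∀ (b : Fin (t + t + 1)) (h : (b : ℕ) < t), g b = fP ⟨b, h⟩ := by
    intro b h; simp [hg, h]
  have hg2 : ∀ (b : Fin (t + t + 1)) (h : ¬ (b : ℕ) < t) (h' : (b : ℕ) - t < t),
      g b = fQ ⟨(b : ℕ) - t, h'⟩ := by
    intro b h h'; simp [hg, h, h']
  have hg3 : ∀ (b : Fin (t + t + 1)), t + t ≤ (b : ℕ) → g b = z := by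
    intro b h
    have h1' : ¬ (b : ℕ) < t := by omega
    have h2' : ¬ ((b : ℕ) - t < t) := by omega
    simp [hg, h1', h2']
  have hgP : ∀ (b : Fin (t + t + 1)), (b : ℕ) < t → G.Adj x (g b) ∧ ¬ G.Adj y (g b) := by
    intro b h; rw [hg1 b h]; exact hPmem _ (hfPP _)
  have hgQ : ∀ (b : Fin (t + t + 1)), t ≤ (b : ℕ) → (b : ℕ) < t + t →
      G.Adj y (g b) ∧ ¬ G.Adj x (g b) := by
    intro b h h'
    have hb : ¬ (b : ℕ) < t := by omega
    have hb' : (b : ℕ) - t < t := by omega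
    rw [hg2 b hb hb']; exact hQmem _ (hfQQ _)
  have hgz : ∀ (b : Fin (t + t + 1)), t + t ≤ (b : ℕ) →
      ¬ G.Adj x (g b) ∧ ¬ G.Adj y (g b) := by
    intro b h; rw [hg3 b h]
    exact ⟨fun h' => hzx (h'.symm), fun h' => hzy (h'.symm)⟩
  have hgcol : ∀ b, c (g b) ≠ c x := by
    intro b
    rcases Nat.lt_or_ge (b : ℕ) t with h | h
    · rw [hg1 b h]; exact hcP _ (hfPP _)
    · rcases Nat.lt_or_ge (b : ℕ) (t + t) with h' | h'
      · have hb : ¬ (b : ℕ) < t := by omega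
        have hb' : (b : ℕ) - t < t := by omega
        rw [hg2 b hb hb']; exact hcQ _ (hfQQ _)
      · rw [hg3 b h']; exact hcz
  have hginj : Function.Injective g := by
    intro b b' hbb'
    rcases Nat.lt_or_ge (b : ℕ) t with h | h <;> rcases Nat.lt_or_ge (b' : ℕ) t with h2 | h2
    · rw [hg1 b h, hg1 b' h2] at hbb'
      have h5 := congrArg Fin.val (hfPinj hbb')
      exact Fin.ext h5
    · exfalso
      rcases Nat.lt_or_ge (b' : ℕ) (t + t) with h3 | h3
      · exact (hgQ b' h2 h3).2 (hbb' ▸ (hgP b h).1)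
      · exact (hgz b' h3).1 (hbb' ▸ (hgP b h).1)
    · exfalso
      rcases Nat.lt_or_ge (b : ℕ) (t + t) with h3 | h3
      · exact (hgQ b h h3).2 (hbb' ▸ (hgP b' h2).1)
      · exact (hgz b h3).1 (hbb' ▸ (hgP b' h2).1)
    · rcases Nat.lt_or_ge (b : ℕ) (t + t) with h3 | h3 <;>
        rcases Nat.lt_or_ge (b' : ℕ) (t + t) with h4 | h4
      · have hb : ¬ (b : ℕ) < t := by omega
        have hb' : (b : ℕ) - t < t := by omega
        have hb2 : ¬ (b' : ℕ) < t := by omega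
        have hb2' : (b' : ℕ) - t < t := by omega
        rw [hg2 b hb hb', hg2 b' hb2 hb2'] at hbb'
        have h5 := congrArg Fin.val (hfQinj hbb')
        simp only [] at h5
        exact Fin.ext (by omega)
      · exact absurd ((hbb' ▸ (hgQ b h h3).1)) (hgz b' h4).2
      · exact absurd ((hbb'.symm ▸ (hgQ b' h2 h4).1)) (hgz b h3).2
      · have hb := b.2; have hb' := b'.2
        exact Fin.ext (by omega)
  set f : Fin 2 → V := fun a => if a = 0 then x else y with hf
  have hf0 : f 0 = x := by simp [hf]
  have hf1 : f 1 = y := by simp [hf]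
  set φ : Fin 2 ⊕ Fin (t + t + 1) → V := Sum.elim f g with hφ
  have hcf : ∀ a, c (f a) = c x := by
    intro a
    rcases htwo a with rfl | rfl
    · rw [hf0]
    · rw [hf1, hcxy]
  have hφinj : Function.Injective φ := by
    intro u v huv
    match u, v with
    | Sum.inl a, Sum.inl a' =>
      simp only [hφ, Sum.elim_inl] at huv
      rcases htwo a with rfl | rfl <;> rcases htwo a' with rfl | rfl
      · rfl
      · rw [hf0, hf1] at huv; exact absurd huv hxy
      · rw [hf0, hf1] at huv; exact absurd huv.symm hxy
      · rfl
    | Sum.inl a, Sum.inr b =>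
      exfalso
      simp only [hφ, Sum.elim_inl, Sum.elim_inr] at huv
      exact hgcol b (by rw [← huv, hcf a])
    | Sum.inr b, Sum.inl a =>
      exfalso
      simp only [hφ, Sum.elim_inl, Sum.elim_inr] at huv
      exact hgcol b (by rw [huv, hcf a])
    | Sum.inr b, Sum.inr b' =>
      simp only [hφ, Sum.elim_inr] at huv
      exact congrArg Sum.inr (hginj huv)
  have hFtp : ∀ (a : Fin 2) (b : Fin (t + t + 1)),
      (Ftp t t).Adj (Sum.inl a) (Sum.inr b) ↔
        ((a = 0 ∧ (b : ℕ) < t) ∨ (a = 1 ∧ t ≤ (b : ℕ) ∧ (b : ℕ) < t + t)) := by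
    intro a b
    simp [Ftp, SimpleGraph.fromRel_adj]
  have hFll : ∀ (a a' : Fin 2), ¬ (Ftp t t).Adj (Sum.inl a) (Sum.inl a') := by
    intro a a'
    simp [Ftp, SimpleGraph.fromRel_adj]
  have hFrr : ∀ (b b' : Fin (t + t + 1)), ¬ (Ftp t t).Adj (Sum.inr b) (Sum.inr b') := by
    intro b b'
    simp [Ftp, SimpleGraph.fromRel_adj]
  have hmain : ∀ (a : Fin 2) (b : Fin (t + t + 1)),
      G.Adj (φ (Sum.inl a)) (φ (Sum.inr b)) ↔ (Ftp t t).Adj (Sum.inl a) (Sum.inr b) := by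
    intro a b
    rw [hFtp]
    simp only [hφ, Sum.elim_inl, Sum.elim_inr]
    have h01 : (0 : Fin 2) ≠ 1 := by decide
    rcases Nat.lt_or_ge (b : ℕ) t with h | h
    · rcases htwo a with rfl | rfl
      · rw [hf0]
        exact iff_of_true (hgP b h).1 (Or.inl ⟨rfl, h⟩)
      · rw [hf1]
        apply iff_of_false (hgP b h).2
        rintro (⟨h0, _⟩ | ⟨_, h1, _⟩)
        · exact h01 h0.symm
        · omega
    · rcases Nat.lt_or_ge (b : ℕ) (t + t) with h' | h'
      · rcases htwo a with rfl | rfl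
        · rw [hf0]
          apply iff_of_false (hgQ b h h').2
          rintro (⟨_, h1⟩ | ⟨h0, _⟩)
          · omega
          · exact h01 h0
        · rw [hf1]
          exact iff_of_true (hgQ b h h').1 (Or.inr ⟨rfl, h, h'⟩)
      · rcases htwo a with rfl | rfl
        · rw [hf0]
          apply iff_of_false (hgz b h').1
          rintro (⟨_, h1⟩ | ⟨h0, _⟩)
          · omega
          · exact h01 h0
        · rw [hf1]
          apply iff_of_false (hgz b h').2
          rintro (⟨h0, _⟩ | ⟨_, _, h1⟩)
          · exact h01 h0.symm
          · omega
  have hiff : ∀ u v, G.Adj (φ u) (φ v) ↔ (Ftp t t).Adj u v := by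
    intro u v
    match u, v with
    | Sum.inl a, Sum.inl a' =>
      apply iff_of_false _ (hFll a a')
      intro hadj
      have hc : c (φ (Sum.inl a)) = c (φ (Sum.inl a')) := by
        simp only [hφ, Sum.elim_inl]
        rw [hcf a, hcf a']
      exact nonadj _ _ hc hadj
    | Sum.inl a, Sum.inr b => exact hmain a b
    | Sum.inr b, Sum.inl a =>
      rw [SimpleGraph.adj_comm, (Ftp t t).adj_comm]
      exact hmain a b
    | Sum.inr b, Sum.inr b' =>
      apply iff_of_false _ (hFrr b b')
      intro hadj
      have hc : c (φ (Sum.inr b)) = c (φ (Sum.inr b')) := by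
        simp only [hφ, Sum.elim_inr]
        exact fin2_eq (hgcol b) (hgcol b')
      exact nonadj _ _ hc hadj
  exact ⟨⟨⟨φ, hφinj⟩, @fun u v => hiff u v⟩⟩

lemma sd_eq_card {V : Type*} [Fintype V] [DecidableEq V]
    (G : SimpleGraph V) [DecidableRel G.Adj] (c : G.Coloring (Fin 2))
    (x y : V) (hcxy : c x = c y) :
    sd G x y = ((G.neighborFinset x \ G.neighborFinset y) ∪
      (G.neighborFinset y \ G.neighborFinset x)).card := by
  have hset : {z : V | z ≠ x ∧ z ≠ y ∧ Xor' (G.Adj x z) (G.Adj y z)} =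
      ↑((G.neighborFinset x \ G.neighborFinset y) ∪
        (G.neighborFinset y \ G.neighborFinset x)) := by
    ext v
    simp only [Set.mem_setOf_eq, Finset.coe_union, Set.mem_union, Finset.coe_sdiff, Set.mem_diff,
      Finset.mem_coe, SimpleGraph.mem_neighborFinset, Xor']
    constructor
    · rintro ⟨hvx, hvy, h | h⟩
      · exact Or.inl ⟨h.1, h.2⟩
      · exact Or.inr ⟨h.1, h.2⟩
    · rintro (⟨h1, h2⟩ | ⟨h1, h2⟩)
      · refine ⟨fun h => ?_, fun h => ?_, Or.inl ⟨h1, h2⟩⟩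
        · rw [h] at h1; exact G.loopless.irrefl x h1
        · rw [h] at h1; exact c.valid h1 hcxy
      · refine ⟨fun h => ?_, fun h => ?_, Or.inr ⟨h1, h2⟩⟩
        · rw [h] at h1; exact c.valid h1 hcxy.symm
        · rw [h] at h1; exact G.loopless.irrefl y h1
  unfold sd
  rw [hset, Set.ncard_coe_finset]

lemma deg_gap {V : Type*} [Fintype V] [DecidableEq V] (t : ℕ)
    (G : SimpleGraph V) [DecidableRel G.Adj] (c : G.Coloring (Fin 2))
    (hfree : ¬ Nonempty (Ftp t t ↪g G))
    (x y z : V) (hxy : x ≠ y) (hcxy : c x = c y) (hcz : c z ≠ c x)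
    (hzx : ¬ G.Adj z x) (hzy : ¬ G.Adj z y)
    (hsd : 2 * t < sd G x y) :
    (G.neighborFinset x).card + 3 ≤ (G.neighborFinset y).card ∨
    (G.neighborFinset y).card + 3 ≤ (G.neighborFinset x).card := by
  set P := G.neighborFinset x \ G.neighborFinset y with hP
  set Q := G.neighborFinset y \ G.neighborFinset x with hQ
  have hdisj : Disjoint P Q := by
    rw [Finset.disjoint_left]
    intro a ha ha'
    rw [hP, Finset.mem_sdiff] at ha
    rw [hQ, Finset.mem_sdiff] at ha'
    exact ha.2 ha'.1
  have hsd' : sd G x y = P.card + Q.card := by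
    rw [sd_eq_card G c x y hcxy, Finset.card_union_of_disjoint hdisj]
  have hPQ : 2 * t < P.card + Q.card := hsd' ▸ hsd
  have hnot : ¬ (t ≤ P.card ∧ t ≤ Q.card) := by
    rintro ⟨hp, hq⟩
    exact hfree (embed_of_pair t G c x y z hxy hcxy hcz hzx hzy hp hq)
  rw [not_and_or, not_le, not_le] at hnot
  have e1 : P.card + (G.neighborFinset y).card =
      (G.neighborFinset x ∪ G.neighborFinset y).card := Finset.card_sdiff_add_card _ _
  have e2 : Q.card + (G.neighborFinset x).card =
      (G.neighborFinset y ∪ G.neighborFinset x).card := Finset.card_sdiff_add_card _ _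
  have e3 : (G.neighborFinset x ∪ G.neighborFinset y).card =
      (G.neighborFinset y ∪ G.neighborFinset x).card := by rw [Finset.union_comm]
  omega

theorem statement4 {V : Type*} [Fintype V] (t : ℕ) (ht : 2 ≤ t) (G : SimpleGraph V)
    (hbip : G.Colorable 2) (hcard : 2 ≤ Nat.card V)
    (hfree : ¬ Nonempty (Ftp t t ↪g G)) :
    ∃ x y : V, x ≠ y ∧ sd G x y ≤ 2 * t := by
  classical
  by_contra hcon
  push_neg at hcon
  rw [Nat.card_eq_fintype_card] at hcard
  obtain ⟨c⟩ := hbip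
  have htwo : ∀ a : Fin 2, a = 0 ∨ a = 1 := by decide
  have hfin2 : ∀ a i j : Fin 2, i ≠ j → a ≠ i → a = j := by decide
  set Part : Fin 2 → Finset V := fun i => Finset.univ.filter (fun v => c v = i) with hPartdef
  have hPart : ∀ (i : Fin 2) (v : V), v ∈ Part i ↔ c v = i := by
    intro i v; simp [hPartdef]
  have hNsub : ∀ (i j : Fin 2), i ≠ j → ∀ v ∈ Part i, G.neighborFinset v ⊆ Part j := by
    intro i j hij v hv u hu
    rw [SimpleGraph.mem_neighborFinset] at hu
    rw [hPart]
    have hne : c u ≠ i := by rw [← (hPart i v).mp hv]; exact fun h => c.valid hu h.symm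
    exact hfin2 _ _ _ hij hne
  have key : ∀ (i j : Fin 2), i ≠ j → ∀ d : ℕ,
      (∀ w ∈ Part i, d ≤ (G.neighborFinset w).card) →
      ∀ z ∈ Part j, (Part i).card - (G.neighborFinset z).card ≤ ((Part j).card - d) / 3 + 1 := by
    intro i j hij d hd z hz
    set S := (Part i).filter (fun v => ¬ G.Adj z v) with hS
    have hnb : (Part i).filter (fun v => G.Adj z v) = G.neighborFinset z := by
      ext u
      rw [Finset.mem_filter, SimpleGraph.mem_neighborFinset]
      constructor
      · exact fun h => h.2
      · intro hu
        refine ⟨(hPart i u).mpr ?_, hu⟩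
        have hne : c u ≠ j := by
          rw [← (hPart j z).mp hz]; exact fun h => c.valid hu h.symm
        exact hfin2 _ _ _ hij.symm hne
    have hScard : (G.neighborFinset z).card + S.card = (Part i).card := by
      rw [← hnb, hS]
      exact Finset.card_filter_add_card_filter_not _
    have hinj : Set.InjOn (fun v => ((G.neighborFinset v).card - d) / 3) S := by
      intro u hu v hv heq
      by_contra hne
      have hu' := Finset.mem_filter.mp hu
      have hv' := Finset.mem_filter.mp hv
      have hcu : c u = i := (hPart i u).mp hu'.1
      have hcv : c v = i := (hPart i v).mp hv'.1
      have hgap := deg_gap t G c hfree u v z hne (hcu.trans hcv.symm)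
        (by rw [hcu, (hPart j z).mp hz]; exact hij.symm) hu'.2 hv'.2 (hcon u v hne)
      have hdu := hd u hu'.1
      have hdv := hd v hv'.1
      simp only [] at heq
      rcases hgap with h | h <;> omega
    have hmaps : ∀ v ∈ S, ((G.neighborFinset v).card - d) / 3 ∈
        Finset.range (((Part j).card - d) / 3 + 1) := by
      intro v hv
      have hv' := Finset.mem_filter.mp hv
      have h1 : d ≤ (G.neighborFinset v).card := hd v hv'.1
      have h2 : (G.neighborFinset v).card ≤ (Part j).card :=
        Finset.card_le_card (hNsub i j hij v hv'.1)
      rw [Finset.mem_range]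
      omega
    have hle := Finset.card_le_card_of_injOn _ hmaps hinj
    rw [Finset.card_range] at hle
    omega
  have sdle : ∀ (i j : Fin 2), i ≠ j → ∀ x ∈ Part i, ∀ y ∈ Part i,
      sd G x y ≤ ((Part j).card - (G.neighborFinset x).card) +
        ((Part j).card - (G.neighborFinset y).card) := by
    intro i j hij x hx y hy
    rw [sd_eq_card G c x y (((hPart i x).mp hx).trans ((hPart i y).mp hy).symm)]
    have h1 : G.neighborFinset x \ G.neighborFinset y ⊆ Part j \ G.neighborFinset y :=
      Finset.sdiff_subset_sdiff (hNsub i j hij x hx) (le_refl _)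
    have h2 : G.neighborFinset y \ G.neighborFinset x ⊆ Part j \ G.neighborFinset x :=
      Finset.sdiff_subset_sdiff (hNsub i j hij y hy) (le_refl _)
    have e1 : (Part j \ G.neighborFinset y).card = (Part j).card - (G.neighborFinset y).card :=
      Finset.card_sdiff_of_subset (hNsub i j hij y hy)
    have e2 : (Part j \ G.neighborFinset x).card = (Part j).card - (G.neighborFinset x).card :=
      Finset.card_sdiff_of_subset (hNsub i j hij x hx)
    calc ((G.neighborFinset x \ G.neighborFinset y) ∪
        (G.neighborFinset y \ G.neighborFinset x)).card
        ≤ (G.neighborFinset x \ G.neighborFinset y).card +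
          (G.neighborFinset y \ G.neighborFinset x).card := Finset.card_union_le _ _
      _ ≤ (Part j \ G.neighborFinset y).card + (Part j \ G.neighborFinset x).card :=
          Nat.add_le_add (Finset.card_le_card h1) (Finset.card_le_card h2)
      _ = _ := by rw [e1, e2]; omega
  have h01 : (0 : Fin 2) ≠ 1 := by decide
  -- degenerate: one side empty
  by_cases hAne : (Part 0).Nonempty
  · by_cases hBne : (Part 1).Nonempty
    · -- main case
      obtain ⟨w₀, hw₀, hw₀min⟩ :=
        Finset.exists_min_image (Part 0) (fun v => (G.neighborFinset v).card) hAne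
      obtain ⟨z₀, hz₀, hz₀min⟩ :=
        Finset.exists_min_image (Part 1) (fun v => (G.neighborFinset v).card) hBne
      have hP := key 0 1 h01 ((G.neighborFinset w₀).card) (fun w hw => hw₀min w hw) z₀ hz₀
      have hQ := key 1 0 h01.symm ((G.neighborFinset z₀).card) (fun w hw => hz₀min w hw) w₀ hw₀
      have hw₀le : (G.neighborFinset w₀).card ≤ (Part 1).card :=
        Finset.card_le_card (hNsub 0 1 h01 w₀ hw₀)
      have hz₀le : (G.neighborFinset z₀).card ≤ (Part 0).card :=
        Finset.card_le_card (hNsub 1 0 h01.symm z₀ hz₀)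
      have hk1 : (Part 0).card - (G.neighborFinset z₀).card ≤ 1 := by omega
      have hk2 : (Part 1).card - (G.neighborFinset w₀).card ≤ 1 := by omega
      rcases Nat.lt_or_ge 1 (Part 0).card with hA2 | hA2
      · obtain ⟨x, hx, y, hy, hxy⟩ := Finset.one_lt_card.mp hA2
        have hdx := hw₀min x hx
        have hdy := hw₀min y hy
        have hsdle := sdle 0 1 h01 x hx y hy
        have hbig := hcon x y hxy
        omega
      · rcases Nat.lt_or_ge 1 (Part 1).card with hB2 | hB2
        · obtain ⟨x, hx, y, hy, hxy⟩ := Finset.one_lt_card.mp hB2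
          have hdx := hz₀min x hx
          have hdy := hz₀min y hy
          have hsdle := sdle 1 0 h01.symm x hx y hy
          have hbig := hcon x y hxy
          omega
        · -- both parts singletons
          obtain ⟨x, hx⟩ := hAne
          obtain ⟨y, hy⟩ := hBne
          have hxy : x ≠ y := by
            intro h
            have h0 := (hPart 0 x).mp hx
            rw [h, (hPart 1 y).mp hy] at h0
            exact h01 h0.symm
          have huniq : ∀ z : V, z = x ∨ z = y := by
            intro z
            rcases htwo (c z) with h | h
            · exact Or.inl (Finset.card_le_one.mp hA2 z ((hPart 0 z).mpr h) x hx)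
            · exact Or.inr (Finset.card_le_one.mp hB2 z ((hPart 1 z).mpr h) y hy)
          have h0 : sd G x y = 0 := by
            unfold sd
            have hempty : {z : V | z ≠ x ∧ z ≠ y ∧ Xor' (G.Adj x z) (G.Adj y z)} = ∅ := by
              apply Set.eq_empty_iff_forall_notMem.mpr
              intro w hw
              rcases huniq w with rfl | rfl
              · exact hw.1 rfl
              · exact hw.2.1 rfl
            rw [hempty]
            exact Set.ncard_empty V
          have := hcon x y hxy
          omega
    · -- Part 1 empty : all vertices color 0, no edges
      have hall : ∀ v : V, c v = 0 := by
        intro v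
        rcases htwo (c v) with h | h
        · exact h
        · exact absurd ⟨v, (hPart 1 v).mpr h⟩ hBne
      have noadj : ∀ u v : V, ¬ G.Adj u v := fun u v h =>
        c.valid h (by rw [hall u, hall v])
      obtain ⟨a, b, hab⟩ := Fintype.exists_pair_of_one_lt_card (α := V) (by omega)
      have h0 : sd G a b = 0 := by
        unfold sd
        have hempty : {z : V | z ≠ a ∧ z ≠ b ∧ Xor' (G.Adj a z) (G.Adj b z)} = ∅ := by
          apply Set.eq_empty_iff_forall_notMem.mpr
          intro w hw
          rcases hw.2.2 with ⟨h, _⟩ | ⟨h, _⟩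
          exacts [noadj _ _ h, noadj _ _ h]
        rw [hempty]
        exact Set.ncard_empty V
      have := hcon a b hab
      omega
  · -- Part 0 empty : all vertices color 1, no edges
    have hall : ∀ v : V, c v = 1 := by
      intro v
      rcases htwo (c v) with h | h
      · exact absurd ⟨v, (hPart 0 v).mpr h⟩ hAne
      · exact h
    have noadj : ∀ u v : V, ¬ G.Adj u v := fun u v h =>
      c.valid h (by rw [hall u, hall v])
    obtain ⟨a, b, hab⟩ := Fintype.exists_pair_of_one_lt_card (α := V) (by omega)
    have h0 : sd G a b = 0 := by
      unfold sd
      have hempty : {z : V | z ≠ a ∧ z ≠ b ∧ Xor' (G.Adj a z) (G.Adj b z)} = ∅ := by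
        apply Set.eq_empty_iff_forall_notMem.mpr
        intro w hw
        rcases hw.2.2 with ⟨h, _⟩ | ⟨h, _⟩
        exacts [noadj _ _ h, noadj _ _ h]
      rw [hempty]
      exact Set.ncard_empty V
    have := hcon a b hab
    omega
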